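/- Let e: ℝⁿ → ℝⁿ, f: ℝⁿ×ℝᵐ → ℝⁿ, g: ℝⁿ×ℝᵐ → ℝᵖ, let P be an n×n symmetric positive-definite matrix, and let μ > 0. If the stability constraint |f(x₁,u) − f(x₂,u)|²_{P⁻¹} − 2(x₁−x₂)'(e(x₁)−e(x₂)) + |x₁−x₂|²_{P+μI} + |g(x₁,u)−g(x₂,u)|² ≤ 0 holds for all x₁, x₂ ∈ ℝⁿ and u ∈ ℝᵐ, then e is strongly monotone: 2(x₁−x₂)'(e(x₁)−e(x₂)) ≥ μ|x₁−x₂|² for all x₁, x₂ ∈ ℝⁿ. -/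

import Mathlib

open Matrix

/-- If the stability constraint holds for all `x₁, x₂, u`,
then `e` is strongly monotone with modulus `μ`:
`2(x₁−x₂)'(e(x₁)−e(x₂)) ≥ μ|x₁−x₂|²`. -/
theorem stmt1 {n m p : ℕ}
    (e : (Fin n → ℝ) → (Fin n → ℝ))
    (f : (Fin n → ℝ) → (Fin m → ℝ) → (Fin n → ℝ))
    (g : (Fin n → ℝ) → (Fin m → ℝ) → (Fin p → ℝ))
    (P : Matrix (Fin n) (Fin n) ℝ) (hP : P.PosDef) (μ : ℝ) (hμ : 0 < μ)
    (hstab : ∀ (x₁ x₂ : Fin n → ℝ) (u : Fin m → ℝ),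
      (f x₁ u - f x₂ u) ⬝ᵥ (P⁻¹ *ᵥ (f x₁ u - f x₂ u))
        - 2 * ((x₁ - x₂) ⬝ᵥ (e x₁ - e x₂))
        + (x₁ - x₂) ⬝ᵥ ((P + μ • (1 : Matrix (Fin n) (Fin n) ℝ)) *ᵥ (x₁ - x₂))
        + (g x₁ u - g x₂ u) ⬝ᵥ (g x₁ u - g x₂ u) ≤ 0) :
    ∀ x₁ x₂ : Fin n → ℝ,
      μ * ((x₁ - x₂) ⬝ᵥ (x₁ - x₂)) ≤ 2 * ((x₁ - x₂) ⬝ᵥ (e x₁ - e x₂)) := by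
  intro x₁ x₂
  have h := hstab x₁ x₂ 0
  set v := x₁ - x₂
  set w := f x₁ 0 - f x₂ 0
  set z := g x₁ 0 - g x₂ 0
  have h1 : 0 ≤ w ⬝ᵥ (P⁻¹ *ᵥ w) := hP.inv.posSemidef.dotProduct_mulVec_nonneg w
  have h2 : 0 ≤ v ⬝ᵥ (P *ᵥ v) := hP.posSemidef.dotProduct_mulVec_nonneg v
  have h3 : 0 ≤ z ⬝ᵥ z := Finset.sum_nonneg fun i _ => mul_self_nonneg (z i)
  have h4 : v ⬝ᵥ ((P + μ • (1 : Matrix (Fin n) (Fin n) ℝ)) *ᵥ v)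
      = v ⬝ᵥ (P *ᵥ v) + μ * (v ⬝ᵥ v) := by
    rw [add_mulVec, dotProduct_add, smul_mulVec, one_mulVec, dotProduct_smul,
      smul_eq_mul]
  rw [h4] at h
  linarith
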